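/- Let f(x) = 1/(x log b) · 1_{(1,b)}(x) with b > 1. Then the self-convolution g = f * f satisfies g(x) = (2/(x log² b)) · log(x−1) for 2 < x < b+1, and g(x) = (2/(x log² b)) · log(b/(x−b)) for b+1 < x < 2b, and g(x) = 0 for x outside (2, 2b). -/

import Mathlib

open MeasureTheory Real Set

private lemma integral_calc (x l u : ℝ) (h0 : 0 < l) (hlu : l < u) (hux : u < x) :
    ∫ y in Set.Ioo l u, 1 / ((x - y) * y) =
      (Real.log (u / l) + Real.log ((x - l) / (x - u))) / x := by
  have hx : 0 < x := lt_trans (lt_trans h0 hlu) hux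
  rw [← integral_Ioc_eq_integral_Ioo, ← intervalIntegral.integral_of_le hlu.le]
  have hIcc : Set.uIcc l u = Set.Icc l u := Set.uIcc_of_le hlu.le
  have hmem : ∀ y ∈ Set.uIcc l u, 0 < y ∧ y < x := by
    intro y hy
    rw [hIcc] at hy
    exact ⟨lt_of_lt_of_le h0 hy.1, lt_of_le_of_lt hy.2 hux⟩
  have hcong : ∀ y ∈ Set.uIcc l u,
      1 / ((x - y) * y) = x⁻¹ * (1 / y + 1 / (x - y)) := by
    intro y hy
    obtain ⟨hy0, hyx⟩ := hmem y hy
    have h1 : x - y ≠ 0 := by linarith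
    field_simp
    ring
  rw [intervalIntegral.integral_congr hcong, intervalIntegral.integral_const_mul]
  have hi1 : IntervalIntegrable (fun y => 1 / y) volume l u :=
    intervalIntegral.intervalIntegrable_one_div
      (fun y hy => (hmem y hy).1.ne') continuousOn_id
  have hi2 : IntervalIntegrable (fun y => 1 / (x - y)) volume l u :=
    intervalIntegral.intervalIntegrable_one_div
      (fun y hy => by
        have := (hmem y hy).2
        intro h
        rw [sub_eq_zero] at h
        linarith)
      (by fun_prop)
  rw [intervalIntegral.integral_add hi1 hi2]
  have e1 : ∫ y in l..u, 1 / y = Real.log (u / l) :=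
    integral_one_div (by rw [hIcc]; intro h; exact absurd (h.1) (not_le.mpr h0))
  have e2 : ∫ y in l..u, 1 / (x - y) = Real.log ((x - l) / (x - u)) := by
    rw [intervalIntegral.integral_comp_sub_left (fun t => 1 / t) x]
    refine integral_one_div ?_
    have h1 : 0 < x - u := by linarith
    have h2 : x - u ≤ x - l := by linarith
    rw [Set.uIcc_of_le h2]
    intro h
    exact absurd h.1 (not_le.mpr h1)
  rw [e1, e2]
  field_simp

/-- Explicit formula for the self-convolution of the truncated Pareto density. -/
theorem stmt_2 (b : ℝ) (hb : 1 < b)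
    (f : ℝ → ℝ)
    (hf : f = fun x => if 1 < x ∧ x < b then 1 / (x * Real.log b) else 0)
    (g : ℝ → ℝ) (hg : g = fun x => ∫ y, f (x - y) * f y) :
    (∀ x, 2 < x → x < b + 1 → g x = 2 / (x * (Real.log b) ^ 2) * Real.log (x - 1)) ∧
    (∀ x, b + 1 < x → x < 2 * b → g x = 2 / (x * (Real.log b) ^ 2) * Real.log (b / (x - b))) ∧
    (∀ x, x ∉ Set.Ioo 2 (2 * b) → g x = 0) := by
  have hlb : 0 < Real.log b := Real.log_pos hb
  -- general rewriting of g as a set integral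
  have key : ∀ x : ℝ, g x = ∫ y in Set.Ioo (max 1 (x - b)) (min b (x - 1)),
      ((Real.log b) ^ 2)⁻¹ * (1 / ((x - y) * y)) := by
    intro x
    have hind : ∀ y : ℝ, f (x - y) * f y =
        Set.indicator (Set.Ioo (max 1 (x - b)) (min b (x - 1)))
          (fun y => ((Real.log b) ^ 2)⁻¹ * (1 / ((x - y) * y))) y := by
      intro y
      by_cases hc : y ∈ Set.Ioo (max 1 (x - b)) (min b (x - 1))
      · rw [Set.indicator_of_mem hc]
        simp only [Set.mem_Ioo, max_lt_iff, lt_min_iff] at hc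
        obtain ⟨⟨hy1, hyxb⟩, hyb, hyx1⟩ := hc
        have h1 : 1 < x - y ∧ x - y < b := ⟨by linarith, by linarith⟩
        have h2 : 1 < y ∧ y < b := ⟨hy1, hyb⟩
        simp only [hf, if_pos h1, if_pos h2]
        have hy0 : y ≠ 0 := by positivity
        have hxy : x - y ≠ 0 := by intro h; rw [sub_eq_zero] at h; linarith
        have hlb0 : Real.log b ≠ 0 := by positivity
        field_simp
      · rw [Set.indicator_of_notMem hc]
        simp only [Set.mem_Ioo, max_lt_iff, lt_min_iff, not_and_or, not_lt] at hc
        simp only [hf]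
        by_cases h1 : 1 < x - y ∧ x - y < b
        · by_cases h2 : 1 < y ∧ y < b
          · exfalso
            rcases hc with (h | h) | h | h
            · linarith [h2.1]
            · linarith [h1.2]
            · linarith [h2.2]
            · linarith [h1.1]
          · rw [if_neg h2, mul_zero]
        · rw [if_neg h1, zero_mul]
    rw [hg]
    simp only
    rw [show (fun y => f (x - y) * f y) = _ from funext hind,
      MeasureTheory.integral_indicator measurableSet_Ioo]
  refine ⟨?_, ?_, ?_⟩
  · intro x hx2 hxb
    have hl : max 1 (x - b) = 1 := max_eq_left (by linarith)
    have hu : min b (x - 1) = x - 1 := min_eq_right (by linarith)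
    rw [key, hl, hu, MeasureTheory.integral_const_mul,
      integral_calc x 1 (x - 1) one_pos (by linarith) (by linarith)]
    have h1 : x - (x - 1) = 1 := by ring
    rw [div_one, h1, div_one]
    have hx0 : x ≠ 0 := by positivity
    field_simp
    ring
  · intro x hx2 hxb
    have hl : max 1 (x - b) = x - b := max_eq_right (by linarith)
    have hu : min b (x - 1) = b := min_eq_left (by linarith)
    rw [key, hl, hu, MeasureTheory.integral_const_mul,
      integral_calc x (x - b) b (by linarith) (by linarith) (by linarith)]
    have h1 : x - (x - b) = b := by ring
    rw [h1]
    have hx0 : x ≠ 0 := by intro h; rw [h] at hx2; linarith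
    field_simp
    ring
  · intro x hx
    rw [key]
    have hempty : Set.Ioo (max 1 (x - b)) (min b (x - 1)) = ∅ := by
      apply Set.Ioo_eq_empty
      apply not_lt.mpr
      rcases le_or_gt x 2 with h | h
      · exact le_trans (min_le_right _ _) (le_max_of_le_left (by linarith))
      · have h2 : 2 * b ≤ x := by
          by_contra hcon
          exact hx ⟨h, not_le.mp hcon⟩
        exact le_trans (min_le_left _ _) (le_max_of_le_right (by linarith))
    rw [hempty]
    simp
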